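/- For the Lie algebra L^P = L(1,0), the bilinear form ω_{RE}(x,y) = E*([x,y]) + ξ (H*∧A*)(x,y) is nondegenerate for every scalar ξ, where (H*∧A*)(x,y) = H*(x)A*(y) − H*(y)A*(x). -/

import Mathlib

/- STATEMENT 3: For L^P = L(1,0) (basis {H,A,B,E} = {b 0,b 1,b 2,b 3}), the form
ω_RE(x,y) = E*([x,y]) + ξ(H*(x)A*(y) − H*(y)A*(x)) is nondegenerate for every scalar ξ. -/

theorem stmt3 {K : Type} [Field K] [CharZero K] {L : Type} [LieRing L] [LieAlgebra K L]
    (b : Module.Basis (Fin 4) K L)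
    (hHA : ⁅b 0, b 1⁆ = b 1) (hHB : ⁅b 0, b 2⁆ = 0) (hHE : ⁅b 0, b 3⁆ = b 3)
    (hAB : ⁅b 1, b 2⁆ = b 3) (hEA : ⁅b 3, b 1⁆ = 0) (hEB : ⁅b 3, b 2⁆ = 0)
    (ξ : K) :
    ∀ x : L,
      (∀ y : L,
        b.coord 3 ⁅x, y⁆ + ξ * (b.coord 0 x * b.coord 1 y - b.coord 0 y * b.coord 1 x) = 0) →
      x = 0 := by
  intro x h
  have hAH : ⁅b 1, b 0⁆ = -b 1 := by rw [← lie_skew, hHA]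
  have hBH : ⁅b 2, b 0⁆ = 0 := by rw [← lie_skew, hHB, neg_zero]
  have hEH : ⁅b 3, b 0⁆ = -b 3 := by rw [← lie_skew, hHE]
  have hBA : ⁅b 2, b 1⁆ = -b 3 := by rw [← lie_skew, hAB]
  have hAE : ⁅b 1, b 3⁆ = 0 := by rw [← lie_skew, hEA, neg_zero]
  have hBE : ⁅b 2, b 3⁆ = 0 := by rw [← lie_skew, hEB, neg_zero]
  have hx : x = b.repr x 0 • b 0 + b.repr x 1 • b 1 + b.repr x 2 • b 2 + b.repr x 3 • b 3 := by
    have := b.sum_repr x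
    rw [Fin.sum_univ_four] at this
    exact this.symm
  have h0 := h (b 0); have h1 := h (b 1); have h2 := h (b 2); have h3 := h (b 3)
  rw [hx] at h0 h1 h2 h3
  simp only [add_lie, smul_lie, lie_self, hHA, hHB, hHE, hAB, hEA, hEB, hAH, hBH, hEH, hBA,
    hAE, hBE, smul_zero, smul_neg, add_zero, zero_add, Module.Basis.coord_apply, map_add, map_neg,
    map_smul, Module.Basis.repr_self, Finsupp.smul_apply, Finsupp.single_apply, Finsupp.neg_apply,
    smul_eq_mul] at h0 h1 h2 h3
  simp (config := { decide := true }) only [reduceIte, neg_zero, add_zero, zero_add, mul_zero, sub_zero, zero_sub] at h0 h1 h2 h3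
  have h0' : b.repr x 0 = 0 := by linear_combination h3
  have h1' : b.repr x 1 = 0 := by linear_combination h2
  have e3 : b.repr x 3 = 0 := by linear_combination -h0 - ξ * h2
  have e2 : b.repr x 2 = 0 := by linear_combination ξ * h3 - h1
  rw [hx, h0', h1', e2, e3]
  simp
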